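/- Let R be a commutative ring, (V,·) a commutative associative non-unital R-algebra that is finite locally free as an R-module, and B a non-degenerate symmetric bilinear form on V with B(uv,w) = B(u,vw). Let λ ∈ R. On A = R·1 ⊕ R·x ⊕ V define multiplication (r + sx, v)(r' + s'x, v') = (rr' + (sr' + s'r + B(v,v'))x, r'v + rv' + vv') and φ(r + sx, v) = rλ + s. Then B_φ(a,b) := φ(ab) is a non-degenerate symmetric bilinear form on A; in fact, with respect to the decomposition A = (R·1 ⊕ R·x) ⊕ V, B_φ is the orthogonal sum of the form with matrix [[λ, 1],[1, 0]] on R·1 ⊕ R·x and the form B on V. -/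

import Mathlib

/-- The unitalization multiplication on `A = R·1 ⊕ R·x ⊕ V` twisted by a bilinear form `B`. -/
def unitalizationMul {R V : Type*} [CommRing R] [NonUnitalCommRing V] [Module R V]
    (B : V →ₗ[R] V →ₗ[R] R) (p q : (R × R) × V) : (R × R) × V :=
  ((p.1.1 * q.1.1, p.1.1 * q.1.2 + p.1.2 * q.1.1 + B p.2 q.2),
    q.1.1 • p.2 + p.1.1 • q.2 + p.2 * q.2)

/-- The orthogonal sum of the form with Gram matrix `[[λ, 1], [1, 0]]` on `R·1 ⊕ R·x`
and the form `B` on `V`, as a bilinear form on `A = R² ⊕ V`. -/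
noncomputable def orthSumForm {R V : Type*} [CommRing R] [NonUnitalCommRing V] [Module R V]
    (B : V →ₗ[R] V →ₗ[R] R) (lam : R) :
    ((R × R) × V) →ₗ[R] ((R × R) × V) →ₗ[R] R :=
  LinearMap.mk₂ R
    (fun p q => p.1.1 * q.1.1 * lam + p.1.1 * q.1.2 + p.1.2 * q.1.1 + B p.2 q.2)
    (by intros m₁ m₂ n
        simp only [Prod.fst_add, Prod.snd_add, map_add, LinearMap.add_apply]
        ring)
    (by intros c m n
        simp only [Prod.smul_fst, Prod.smul_snd, map_smul, LinearMap.smul_apply,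
          smul_eq_mul]
        ring)
    (by intros m n₁ n₂
        simp only [Prod.fst_add, Prod.snd_add, map_add, LinearMap.add_apply]
        ring)
    (by intros c m n
        simp only [Prod.smul_fst, Prod.smul_snd, map_smul, LinearMap.smul_apply,
          smul_eq_mul]
        ring)

/-- Let `(V, ·)` be a commutative associative non-unital `R`-algebra, finite
locally free as an `R`-module, `B` a non-degenerate symmetric bilinear form on `V` with
`B(uv, w) = B(u, vw)`, and `λ ∈ R`.  On `A = R·1 ⊕ R·x ⊕ V` with the unitalization
multiplication and `φ(r + s·x, v) = r λ + s`, the form `B_φ(a, b) = φ (a b)` is a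
non-degenerate symmetric bilinear form; in fact it is the orthogonal sum of the form
`[[λ, 1], [1, 0]]` on `R·1 ⊕ R·x` and the form `B` on `V`. -/
theorem unitalization_orientation_nondegenerate
    (R V : Type*) [CommRing R] [NonUnitalCommRing V] [Module R V]
    [IsScalarTower R V V] [SMulCommClass R V V]
    [Module.Finite R V] [Module.Projective R V]
    (B : V →ₗ[R] V →ₗ[R] R)
    (hsymm : ∀ u v : V, B u v = B v u)
    (hassoc : ∀ u v w : V, B (u * v) w = B u (v * w))
    (hBnd : Function.Bijective fun v : V => B v)
    (lam : R) (φ : (R × R) × V → R) (hφ : ∀ p, φ p = p.1.1 * lam + p.1.2) :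
    (∀ p q : (R × R) × V, φ (unitalizationMul B p q) = φ (unitalizationMul B q p)) ∧
    (∀ p q : (R × R) × V, φ (unitalizationMul B p q) = orthSumForm B lam p q) ∧
    Function.Bijective fun p : (R × R) × V => orthSumForm B lam p := by
  refine ⟨?_, ?_, ?_, ?_⟩
  · intro p q
    simp only [hφ, unitalizationMul, hsymm p.2 q.2]
    ring
  · intro p q
    simp only [hφ, unitalizationMul, orthSumForm, LinearMap.mk₂_apply]
    ring
  · -- injective
    intro p q h
    have h1 : orthSumForm B lam p ((1, 0), 0) = orthSumForm B lam q ((1, 0), 0) :=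
      congrArg (fun f : ((R × R) × V) →ₗ[R] R => f ((1, 0), 0)) h
    have h2 : orthSumForm B lam p ((0, 1), 0) = orthSumForm B lam q ((0, 1), 0) :=
      congrArg (fun f : ((R × R) × V) →ₗ[R] R => f ((0, 1), 0)) h
    simp only [orthSumForm, LinearMap.mk₂_apply, mul_one, mul_zero, add_zero, map_zero,
      LinearMap.zero_apply, zero_add, one_mul] at h1 h2
    have hfst : p.1.1 = q.1.1 := by simpa using h2
    have hsnd : p.1.2 = q.1.2 := by
      have := h1
      rw [hfst] at this
      exact add_left_cancel this
    have hv : p.2 = q.2 := by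
      apply hBnd.1
      ext w
      have h3 : orthSumForm B lam p ((0, 0), w) = orthSumForm B lam q ((0, 0), w) :=
        congrArg (fun f : ((R × R) × V) →ₗ[R] R => f ((0, 0), w)) h
      simpa [orthSumForm] using h3
    exact Prod.ext (Prod.ext hfst hsnd) hv
  · -- surjective
    intro f
    set e1 : (R × R) × V := ((1, 0), 0)
    set e2 : (R × R) × V := ((0, 1), 0)
    obtain ⟨v, hv⟩ := hBnd.2 (f.comp (LinearMap.inr R (R × R) V))
    refine ⟨((f e2, f e1 - f e2 * lam), v), ?_⟩
    refine LinearMap.ext fun q => ?_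
    have hq : q = q.1.1 • e1 + q.1.2 • e2 + ((0, 0), q.2) := by
      simp [e1, e2, Prod.ext_iff]
    calc orthSumForm B lam ((f e2, f e1 - f e2 * lam), v) q
        = q.1.1 * f e1 + q.1.2 * f e2 + (f.comp (LinearMap.inr R (R × R) V)) q.2 := by
          have : (fun w : V => B v w) = fun w => (f.comp (LinearMap.inr R (R × R) V)) w := by
            rw [← hv]
          simp only [orthSumForm, LinearMap.mk₂_apply]
          rw [show B v q.2 = (f.comp (LinearMap.inr R (R × R) V)) q.2 from congrFun this q.2]
          ring
      _ = f q := by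
          conv_rhs => rw [hq]
          simp [mul_comm]
          rfl
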